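/- If L ∘ Δ ∘ L = L ∘ L (equivalently L ∘ Δ⊥ ∘ L = 0), then Δ ∘ L^n ∘ Δ⊥ ∘ L^{n'} ∘ Δ = 0 for all n, n' ≥ 1, and hence the dynamics exp(tL) is NCGD. -/

import Mathlib

set_option synthInstance.maxHeartbeats 1000000
set_option maxHeartbeats 2000000

lemma dephasing_aux {R : Type*} [Ring R] (M N Δ : R) (hΔ : Δ * Δ = Δ)
    (h0 : M * (1 - Δ) * N = 0) :
    ∀ n k : ℕ, Δ * M ^ n * (1 - Δ) * N ^ k * Δ = 0 := by
  have hΔ1 : Δ * (1 - Δ) = 0 := by rw [mul_sub, mul_one, hΔ, sub_self]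
  have hΔ2 : (1 - Δ) * Δ = 0 := by rw [sub_mul, one_mul, hΔ, sub_self]
  intro n k
  match n, k with
  | 0, k => simp [hΔ1]
  | n + 1, 0 => simp [mul_assoc, hΔ2]
  | n + 1, k + 1 =>
    have e : M ^ (n + 1) * (1 - Δ) * N ^ (k + 1) =
        M ^ n * (M * (1 - Δ) * N) * N ^ k := by
      rw [pow_succ, pow_succ']; noncomm_ring
    calc Δ * M ^ (n + 1) * (1 - Δ) * N ^ (k + 1) * Δ
        = Δ * (M ^ (n + 1) * (1 - Δ) * N ^ (k + 1)) * Δ := by noncomm_ring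
      _ = 0 := by rw [e, h0]; simp

/-- if `L ∘ Δ ∘ L = L ∘ L` then `Δ L^n Δ⊥ L^{n'} Δ = 0` for all `n, n' ≥ 1`,
and the dynamics `exp(tL)` is NCGD. -/
theorem dephasing_insensitive_implies_ncgd (d : ℕ)
    (L Δ : EuclideanSpace ℂ (Fin d) →L[ℂ] EuclideanSpace ℂ (Fin d)) (hΔ : Δ * Δ = Δ)
    (h : L * Δ * L = L * L) :
    (∀ n n' : ℕ, 1 ≤ n → 1 ≤ n' → Δ * L ^ n * (1 - Δ) * L ^ n' * Δ = 0) ∧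
    (∀ t τ : ℝ, 0 ≤ t → 0 ≤ τ →
      Δ * NormedSpace.exp (t • L) * (1 - Δ) * NormedSpace.exp (τ • L) * Δ = 0) := by
  have h0 : L * (1 - Δ) * L = 0 := by
    rw [mul_sub, mul_one, sub_mul, h, sub_self]
  refine ⟨fun n n' _ _ => dephasing_aux L L Δ hΔ h0 n n', fun t τ _ _ => ?_⟩
  have hts : ∀ (s : ℝ), s • L = ((s : ℂ)) • L := by
    intro s; ext x i; simp [Complex.real_smul]
  have h0' : (t • L) * (1 - Δ) * (τ • L) = 0 := by
    rw [hts t, hts τ, smul_mul_assoc, smul_mul_assoc, mul_smul_comm, h0]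
    ext x i
    simp
  have key0 := dephasing_aux (t • L) (τ • L) Δ hΔ h0'
  set f : ℕ → (EuclideanSpace ℂ (Fin d) →L[ℂ] EuclideanSpace ℂ (Fin d)) :=
    fun n => (Nat.factorial n : ℂ)⁻¹ • (t • L) ^ n with hf_def
  set g : ℕ → (EuclideanSpace ℂ (Fin d) →L[ℂ] EuclideanSpace ℂ (Fin d)) :=
    fun n => (Nat.factorial n : ℂ)⁻¹ • (τ • L) ^ n with hg_def
  have hf : Summable f := NormedSpace.expSeries_summable' (𝕂 := ℂ) (t • L)
  have hg : Summable g := NormedSpace.expSeries_summable' (𝕂 := ℂ) (τ • L)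
  have key : ∀ n k : ℕ, Δ * f n * ((1 - Δ) * g k * Δ) = 0 := by
    intro n k
    have h1 := key0 n k
    simp only [hf_def, hg_def, smul_mul_assoc, mul_smul_comm]
    simp only [mul_assoc] at h1 ⊢
    simp [h1]
  simp only [NormedSpace.exp_eq_tsum ℂ]
  have hG : Summable fun k => (1 - Δ) * g k * Δ := (hg.mul_left _).mul_right _
  have e2 : (1 - Δ) * (∑' k, g k) * Δ = ∑' k, (1 - Δ) * g k * Δ := by
    rw [(hg.mul_left (1 - Δ)).tsum_mul_right Δ, hg.tsum_mul_left (1 - Δ)]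
  calc Δ * (∑' n, f n) * (1 - Δ) * (∑' k, g k) * Δ
      = Δ * (∑' n, f n) * ((1 - Δ) * (∑' k, g k) * Δ) := by noncomm_ring
    _ = ∑' n, Δ * f n * ((1 - Δ) * (∑' k, g k) * Δ) := by
        rw [(hf.mul_left Δ).tsum_mul_right, hf.tsum_mul_left Δ]
    _ = ∑' n, Δ * f n * (∑' k, (1 - Δ) * g k * Δ) := by rw [e2]
    _ = ∑' n, ∑' k, Δ * f n * ((1 - Δ) * g k * Δ) := by
        refine tsum_congr fun n => ?_
        rw [hG.tsum_mul_left (Δ * f n)]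
    _ = 0 := by simp [key]
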